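/- Let G be a finite simple graph with no isolated vertices, minimum degree δ and maximum degree Δ, and let s_0 be the unique solution of s² − 2√s + 1 = 0 in (0,1). Then R(G) ≤ (Δ/2)·ID(G), with equality if and only if G is regular; moreover, if δ ≥ s_0·Δ then R(G) ≥ (δ/2)·ID(G), while if δ ≤ s_0·Δ then R(G) ≥ ((Δδ)^{3/2}/(Δ²+δ²))·ID(G). Here ID(G) = Σ_{u∈V(G)} 1/d_u is the inverse degree index. -/

import Mathlib

open Finset

variable {V : Type*}

/-- Randić index: `Σ_{uv∈E} (d_u d_v)^{-1/2}`, written as half a double sum over vertices. -/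
noncomputable def randicIndex [Fintype V] (G : SimpleGraph V) [DecidableRel G.Adj] : ℝ :=
  (1 / 2) * ∑ u, ∑ v ∈ G.neighborFinset u,
    1 / Real.sqrt ((G.degree u : ℝ) * (G.degree v : ℝ))

/-- Inverse degree index `ID(G) = Σ_{u∈V} 1/d_u`. -/
noncomputable def inverseDegree [Fintype V] (G : SimpleGraph V) [DecidableRel G.Adj] : ℝ :=
  ∑ u, 1 / (G.degree u : ℝ)

private lemma frac_of_poly (c a b : ℝ) (ha : 0 < a) (hb : 0 < b)
    (key : c * (a^4 + b^4) ≤ a^3 * b^3) :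
    c * (1/(a^2)^2 + 1/(b^2)^2) ≤ 1/(a*b) := by
  rw [le_div_iff₀ (by positivity)]
  have h : c * (1/(a^2)^2 + 1/(b^2)^2) * (a*b) = (c*(a^4+b^4))/(a^3*b^3) := by
    field_simp; ring
  rw [h, div_le_one (by positivity)]
  exact key

private lemma frac_of_poly' (c a b : ℝ) (ha : 0 < a) (hb : 0 < b)
    (key : a^3 * b^3 ≤ c * (a^4 + b^4)) :
    1/(a*b) ≤ c * (1/(a^2)^2 + 1/(b^2)^2) := by
  rw [div_le_iff₀ (by positivity)]
  have h : c * (1/(a^2)^2 + 1/(b^2)^2) * (a*b) = (c*(a^4+b^4))/(a^3*b^3) := by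
    field_simp; ring
  rw [h, le_div_iff₀ (by positivity)]
  nlinarith [key]

private lemma polyC_half (w δ a b : ℝ) (hw0 : 0 < w)
    (hw : w^3 + w^2 + w = 1) (hδ0 : 0 ≤ δ)
    (hδa : δ ≤ a^2) (hab : a ≤ b) (hw2 : w^2*b^2 ≤ a^2) (ha : 0 < a) :
    δ * (a^4 + b^4) ≤ 2 * a^3 * b^3 := by
  have hb : 0 < b := lt_of_lt_of_le ha hab
  have hwba : w * b ≤ a := by nlinarith [mul_pos hw0 hb]
  have h2 : b^3 ≤ a^3 + a^2*b + a*b^2 := by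
    have e : a^3 + a^2*b + a*b^2 - b^3 =
        (a - w*b)*(a^2 + a*(w*b) + (w*b)^2 + a*b + w*b^2 + b^2) := by
      linear_combination b^3 * hw
    nlinarith [mul_nonneg (sub_nonneg.2 hwba)
      (by positivity : (0:ℝ) ≤ a^2 + a*(w*b) + (w*b)^2 + a*b + w*b^2 + b^2), e]
  have h3 : a^4 + b^4 ≤ 2*a*b^3 := by
    nlinarith [mul_nonneg (sub_nonneg.2 hab) (sub_nonneg.2 h2)]
  nlinarith [mul_nonneg hδ0 (sub_nonneg.2 h3),
    mul_nonneg (mul_nonneg ha.le (pow_pos hb 3).le) (sub_nonneg.2 hδa)]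

private lemma polyD_half (w p q a b : ℝ) (hp : 0 < p) (hw0 : 0 < w)
    (hw : w^3 + w^2 + w = 1) (hpw : p ≤ w*q)
    (hpa : p ≤ a) (hab : a ≤ b) (hbq : b ≤ q) :
    p^3 * q^3 * (a^4 + b^4) ≤ a^3 * b^3 * (p^4 + q^4) := by
  have ha : 0 < a := lt_of_lt_of_le hp hpa
  have hb : 0 < b := lt_of_lt_of_le ha hab
  have hq : 0 < q := lt_of_lt_of_le hb hbq
  have h1 : 0 ≤ a*q - p*b := by nlinarith
  have h2 : p*a^3*q^2 + p^2*a^2*q*b + p^3*a*b^2 ≤ q^3*b^3 := by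
    calc p*a^3*q^2 + p^2*a^2*q*b + p^3*a*b^2
        ≤ (w*q)*b^3*q^2 + (w*q)^2*b^2*q*b + (w*q)^3*b*b^2 := by gcongr <;> positivity
      _ = (w^3 + w^2 + w)*(q^3*b^3) := by ring
      _ = q^3*b^3 := by rw [hw]; ring
  have h3 : p*q^3*(a^4+b^4) ≤ a*b^3*(p^4+q^4) := by
    nlinarith [mul_nonneg h1 (sub_nonneg.2 h2)]
  nlinarith [mul_nonneg (sq_nonneg p) (sub_nonneg.2 h3),
    mul_nonneg (mul_nonneg (mul_nonneg ha.le (pow_pos hb 3).le)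
      (by positivity : (0:ℝ) ≤ p^4 + q^4)) (sub_nonneg.2 (by nlinarith : p^2 ≤ a^2))]

private lemma term_upper (Δ x y : ℝ) (hx : 0 < x) (hy : 0 < y) (hxΔ : x ≤ Δ) (hyΔ : y ≤ Δ) :
    1 / Real.sqrt (x*y) ≤ Δ/2 * (1/x^2 + 1/y^2) := by
  have ha : 0 < Real.sqrt x := Real.sqrt_pos.2 hx
  have hb : 0 < Real.sqrt y := Real.sqrt_pos.2 hy
  have hax : (Real.sqrt x)^2 = x := Real.sq_sqrt hx.le
  have hby : (Real.sqrt y)^2 = y := Real.sq_sqrt hy.le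
  set a := Real.sqrt x
  set b := Real.sqrt y
  have hsq : Real.sqrt (x*y) = a*b := Real.sqrt_mul hx.le y
  rw [hsq, ← hax, ← hby]
  refine frac_of_poly' (Δ/2) a b ha hb ?_
  have hab : a*b ≤ Δ := by nlinarith [sq_nonneg (a-b)]
  nlinarith [mul_nonneg (mul_nonneg ha.le hb.le) (sq_nonneg (a^2 - b^2)),
    mul_nonneg (sub_nonneg.2 hab) (by positivity : (0:ℝ) ≤ a^4 + b^4)]

private lemma term_am (x y : ℝ) (hx : 0 < x) (hy : 0 < y) :
    1 / Real.sqrt (x*y) ≤ 1/2 * (1/x + 1/y) := by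
  have ha : 0 < Real.sqrt x := Real.sqrt_pos.2 hx
  have hb : 0 < Real.sqrt y := Real.sqrt_pos.2 hy
  have hax : (Real.sqrt x)^2 = x := Real.sq_sqrt hx.le
  have hby : (Real.sqrt y)^2 = y := Real.sq_sqrt hy.le
  set a := Real.sqrt x
  set b := Real.sqrt y
  have hsq : Real.sqrt (x*y) = a*b := Real.sqrt_mul hx.le y
  rw [hsq, ← hax, ← hby, div_le_iff₀ (by positivity)]
  have h : 1/2 * (1/a^2 + 1/b^2) * (a*b) = (a^2+b^2)*(a*b)/(2*a^2*b^2) := by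
    field_simp; ring
  rw [h, le_div_iff₀ (by positivity)]
  nlinarith [mul_nonneg (mul_nonneg ha.le hb.le) (sq_nonneg (a-b))]

private lemma term_lowerC (w δ Δ x y : ℝ) (hw0 : 0 < w) (hw : w^3 + w^2 + w = 1)
    (hδ : 0 ≤ δ) (hcond : w^2*Δ ≤ δ) (hx : δ ≤ x) (hxΔ : x ≤ Δ) (hy : δ ≤ y) (hyΔ : y ≤ Δ)
    (hx0 : 0 < x) (hy0 : 0 < y) :
    δ/2 * (1/x^2 + 1/y^2) ≤ 1 / Real.sqrt (x*y) := by
  have ha : 0 < Real.sqrt x := Real.sqrt_pos.2 hx0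
  have hb : 0 < Real.sqrt y := Real.sqrt_pos.2 hy0
  have hax : (Real.sqrt x)^2 = x := Real.sq_sqrt hx0.le
  have hby : (Real.sqrt y)^2 = y := Real.sq_sqrt hy0.le
  set a := Real.sqrt x
  set b := Real.sqrt y
  have hsq : Real.sqrt (x*y) = a*b := Real.sqrt_mul hx0.le y
  rw [hsq, ← hax, ← hby]
  refine frac_of_poly (δ/2) a b ha hb ?_
  rcases le_total a b with hab | hab
  · have := polyC_half w δ a b hw0 hw hδ (by rw [hax]; exact hx) hab
      (by rw [hax, hby]; nlinarith [sq_nonneg w]) ha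
    linarith
  · have := polyC_half w δ b a hw0 hw hδ (by rw [hby]; exact hy) hab
      (by rw [hax, hby]; nlinarith [sq_nonneg w]) hb
    linarith

private lemma term_lowerD (w δ Δ x y : ℝ) (hw0 : 0 < w) (hw : w^3 + w^2 + w = 1)
    (hδ : 0 < δ) (hcond : δ ≤ w^2*Δ) (hx : δ ≤ x) (hxΔ : x ≤ Δ) (hy : δ ≤ y) (hyΔ : y ≤ Δ) :
    (Real.sqrt δ)^3 * (Real.sqrt Δ)^3 / ((Real.sqrt δ)^4 + (Real.sqrt Δ)^4) * (1/x^2 + 1/y^2)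
      ≤ 1 / Real.sqrt (x*y) := by
  have hx0 : 0 < x := lt_of_lt_of_le hδ hx
  have hy0 : 0 < y := lt_of_lt_of_le hδ hy
  have hΔ : 0 < Δ := lt_of_lt_of_le hx0 hxΔ
  have hp : 0 < Real.sqrt δ := Real.sqrt_pos.2 hδ
  have hq : 0 < Real.sqrt Δ := Real.sqrt_pos.2 hΔ
  have hpδ : (Real.sqrt δ)^2 = δ := Real.sq_sqrt hδ.le
  have hqΔ : (Real.sqrt Δ)^2 = Δ := Real.sq_sqrt hΔ.le
  set p := Real.sqrt δ
  set q := Real.sqrt Δ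
  have ha : 0 < Real.sqrt x := Real.sqrt_pos.2 hx0
  have hb : 0 < Real.sqrt y := Real.sqrt_pos.2 hy0
  have hax : (Real.sqrt x)^2 = x := Real.sq_sqrt hx0.le
  have hby : (Real.sqrt y)^2 = y := Real.sq_sqrt hy0.le
  set a := Real.sqrt x
  set b := Real.sqrt y
  have hsq : Real.sqrt (x*y) = a*b := Real.sqrt_mul hx0.le y
  rw [hsq, ← hax, ← hby]
  refine frac_of_poly _ a b ha hb ?_
  rw [div_mul_eq_mul_div, div_le_iff₀ (by positivity)]
  have hpw : p ≤ w*q := by nlinarith [mul_pos hw0 hq]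
  have hpa : p ≤ a := by nlinarith
  have hbq : b ≤ q := by nlinarith
  have haq : a ≤ q := by nlinarith
  have hpb : p ≤ b := by nlinarith
  rcases le_total a b with hab | hab
  · have := polyD_half w p q a b hp hw0 hw hpw hpa hab hbq
    nlinarith
  · have := polyD_half w p q b a hp hw0 hw hpw hpb hab haq
    nlinarith

section GraphSums

variable [Fintype V] (G : SimpleGraph V) [DecidableRel G.Adj]

private lemma double_sum_add (f g : V → V → ℝ) :
    ∑ u, ∑ v ∈ G.neighborFinset u, (f u v + g u v)
      = (∑ u, ∑ v ∈ G.neighborFinset u, f u v) + ∑ u, ∑ v ∈ G.neighborFinset u, g u v := by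
  rw [← Finset.sum_add_distrib]
  exact sum_congr rfl fun u _ => Finset.sum_add_distrib

private lemma double_sum_const_mul (c : ℝ) (f : V → V → ℝ) :
    ∑ u, ∑ v ∈ G.neighborFinset u, c * f u v = c * ∑ u, ∑ v ∈ G.neighborFinset u, f u v := by
  rw [Finset.mul_sum]
  exact sum_congr rfl fun u _ => (Finset.mul_sum _ _ _).symm

private lemma adj_sum_swap (f : V → V → ℝ) :
    ∑ u, ∑ v ∈ G.neighborFinset u, f u v = ∑ u, ∑ v ∈ G.neighborFinset u, f v u := by
  have h : ∀ g : V → V → ℝ, ∑ u, ∑ v ∈ G.neighborFinset u, g u v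
      = ∑ u, ∑ v, if G.Adj u v then g u v else 0 := by
    intro g
    refine sum_congr rfl fun u _ => ?_
    rw [SimpleGraph.neighborFinset_eq_filter, sum_filter]
  rw [h f, h (fun u v => f v u), Finset.sum_comm]
  refine sum_congr rfl fun u _ => sum_congr rfl fun v _ => ?_
  simp_rw [G.adj_comm]

private lemma sum_inv_sq :
    ∑ u, ∑ _v ∈ G.neighborFinset u, 1/((G.degree u : ℝ))^2 = inverseDegree G := by
  unfold inverseDegree
  refine sum_congr rfl fun u _ => ?_
  rw [sum_const, G.card_neighborFinset_eq_degree, nsmul_eq_mul]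
  rcases eq_or_ne (G.degree u) 0 with h | h
  · simp [h]
  · have : ((G.degree u : ℝ)) ≠ 0 := Nat.cast_ne_zero.2 h
    field_simp

private lemma sum_pair_inv_sq :
    ∑ u, ∑ v ∈ G.neighborFinset u, (1/((G.degree u : ℝ))^2 + 1/((G.degree v : ℝ))^2)
      = 2 * inverseDegree G := by
  have h1 : ∑ u, ∑ v ∈ G.neighborFinset u, (1/((G.degree u : ℝ))^2 + 1/((G.degree v : ℝ))^2)
      = (∑ u, ∑ _v ∈ G.neighborFinset u, 1/((G.degree u : ℝ))^2)
        + ∑ u, ∑ v ∈ G.neighborFinset u, 1/((G.degree v : ℝ))^2 := by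
    rw [← Finset.sum_add_distrib]
    exact sum_congr rfl fun u _ => Finset.sum_add_distrib
  rw [h1, adj_sum_swap G (fun u v => 1/((G.degree v : ℝ))^2)]
  rw [sum_inv_sq]
  ring

end GraphSums

theorem randic_inverse_degree_bounds [Fintype V] (G : SimpleGraph V) [DecidableRel G.Adj]
    (hiso : ∀ v : V, 0 < G.degree v) (s₀ : ℝ)
    (hs₀ : s₀ ∈ Set.Ioo (0:ℝ) 1 ∧ s₀^2 - 2 * Real.sqrt s₀ + 1 = 0) :
    (randicIndex G ≤ (G.maxDegree : ℝ) / 2 * inverseDegree G) ∧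
    (randicIndex G = (G.maxDegree : ℝ) / 2 * inverseDegree G ↔
      ∃ k, G.IsRegularOfDegree k) ∧
    (s₀ * (G.maxDegree : ℝ) ≤ (G.minDegree : ℝ) →
      (G.minDegree : ℝ) / 2 * inverseDegree G ≤ randicIndex G) ∧
    ((G.minDegree : ℝ) ≤ s₀ * (G.maxDegree : ℝ) →
      ((G.maxDegree : ℝ) * (G.minDegree : ℝ)) ^ ((3:ℝ)/2) /
          ((G.maxDegree : ℝ)^2 + (G.minDegree : ℝ)^2) * inverseDegree G ≤ randicIndex G) := by
  obtain ⟨⟨hs0pos, hs0lt⟩, hs0eq⟩ := hs₀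
  -- properties of w = √s₀
  set w := Real.sqrt s₀ with hwdef
  have hw0 : 0 < w := Real.sqrt_pos.2 hs0pos
  have hw2 : w^2 = s₀ := Real.sq_sqrt hs0pos.le
  have hw1 : w < 1 := by
    nlinarith [hw2]
  have hw : w^3 + w^2 + w = 1 := by
    have h4 : w^4 - 2*w + 1 = 0 := by nlinarith [hw2, hs0eq]
    have hfac : (w - 1) * (w^3 + w^2 + w - 1) = 0 := by linear_combination h4
    rcases mul_eq_zero.1 hfac with h | h
    · exact absurd h (by nlinarith)
    · linarith
  -- degree facts
  have hdeg_pos : ∀ u : V, (0:ℝ) < (G.degree u : ℝ) := fun u => by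
    exact_mod_cast hiso u
  have hdeg_le : ∀ u : V, (G.degree u : ℝ) ≤ (G.maxDegree : ℝ) := fun u => by
    exact_mod_cast G.degree_le_maxDegree u
  have hdeg_ge : ∀ u : V, (G.minDegree : ℝ) ≤ (G.degree u : ℝ) := fun u => by
    exact_mod_cast G.minDegree_le_degree u
  have hδΔ : (G.minDegree : ℝ) ≤ (G.maxDegree : ℝ) := by
    rcases isEmpty_or_nonempty V with hV | hV
    · simp [SimpleGraph.minDegree, SimpleGraph.maxDegree, univ_eq_empty]
    · exact le_trans (hdeg_ge (Classical.arbitrary V)) (hdeg_le (Classical.arbitrary V))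
  -- Part 1 : upper bound
  have part1 : randicIndex G ≤ (G.maxDegree : ℝ) / 2 * inverseDegree G := by
    unfold randicIndex
    have hb : ∑ u, ∑ v ∈ G.neighborFinset u,
        1 / Real.sqrt ((G.degree u : ℝ) * (G.degree v : ℝ))
        ≤ ∑ u, ∑ v ∈ G.neighborFinset u,
          (G.maxDegree : ℝ)/2 * (1/((G.degree u : ℝ))^2 + 1/((G.degree v : ℝ))^2) := by
      refine Finset.sum_le_sum fun u _ => Finset.sum_le_sum fun v _ => ?_
      exact term_upper _ _ _ (hdeg_pos u) (hdeg_pos v) (hdeg_le u) (hdeg_le v)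
    have heq : ∑ u, ∑ v ∈ G.neighborFinset u,
        (G.maxDegree : ℝ)/2 * (1/((G.degree u : ℝ))^2 + 1/((G.degree v : ℝ))^2)
        = (G.maxDegree : ℝ)/2 * (2 * inverseDegree G) := by
      rw [← sum_pair_inv_sq G]
      simp_rw [← Finset.mul_sum]
    calc (1/2) * ∑ u, ∑ v ∈ G.neighborFinset u,
          1 / Real.sqrt ((G.degree u : ℝ) * (G.degree v : ℝ))
        ≤ (1/2) * ((G.maxDegree : ℝ)/2 * (2 * inverseDegree G)) := by
          rw [← heq]; linarith [hb]
      _ = (G.maxDegree : ℝ) / 2 * inverseDegree G := by ring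
  -- Part 3 : lower bound when s₀Δ ≤ δ
  have part3 : s₀ * (G.maxDegree : ℝ) ≤ (G.minDegree : ℝ) →
      (G.minDegree : ℝ) / 2 * inverseDegree G ≤ randicIndex G := by
    intro hcond
    unfold randicIndex
    have hb : ∑ u, ∑ v ∈ G.neighborFinset u,
        (G.minDegree : ℝ)/2 * (1/((G.degree u : ℝ))^2 + 1/((G.degree v : ℝ))^2)
        ≤ ∑ u, ∑ v ∈ G.neighborFinset u,
          1 / Real.sqrt ((G.degree u : ℝ) * (G.degree v : ℝ)) := by
      refine Finset.sum_le_sum fun u _ => Finset.sum_le_sum fun v _ => ?_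
      refine term_lowerC w _ _ _ _ hw0 hw (by positivity) (by rw [hw2]; exact hcond)
        (hdeg_ge u) (hdeg_le u) (hdeg_ge v) (hdeg_le v) (hdeg_pos u) (hdeg_pos v)
    have heq : ∑ u, ∑ v ∈ G.neighborFinset u,
        (G.minDegree : ℝ)/2 * (1/((G.degree u : ℝ))^2 + 1/((G.degree v : ℝ))^2)
        = (G.minDegree : ℝ)/2 * (2 * inverseDegree G) := by
      rw [← sum_pair_inv_sq G]
      simp_rw [← Finset.mul_sum]
    calc (G.minDegree : ℝ) / 2 * inverseDegree G
        = (1/2) * ((G.minDegree : ℝ)/2 * (2 * inverseDegree G)) := by ring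
      _ ≤ (1/2) * ∑ u, ∑ v ∈ G.neighborFinset u,
          1 / Real.sqrt ((G.degree u : ℝ) * (G.degree v : ℝ)) := by
          rw [← heq]; linarith [hb]
  -- Part 4 : lower bound when δ ≤ s₀Δ
  have part4 : (G.minDegree : ℝ) ≤ s₀ * (G.maxDegree : ℝ) →
      ((G.maxDegree : ℝ) * (G.minDegree : ℝ)) ^ ((3:ℝ)/2) /
          ((G.maxDegree : ℝ)^2 + (G.minDegree : ℝ)^2) * inverseDegree G ≤ randicIndex G := by
    intro hcond
    rcases isEmpty_or_nonempty V with hV | hV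
    · simp [randicIndex, inverseDegree, univ_eq_empty]
    have hδpos : (0:ℝ) < (G.minDegree : ℝ) := by
      obtain ⟨v, hv⟩ := G.exists_minimal_degree_vertex
      rw [hv]; exact hdeg_pos v
    have hΔpos : (0:ℝ) < (G.maxDegree : ℝ) := lt_of_lt_of_le hδpos hδΔ
    set δ := (G.minDegree : ℝ)
    set Δ := (G.maxDegree : ℝ)
    have hC : (Δ * δ) ^ ((3:ℝ)/2) / (Δ^2 + δ^2)
        = (Real.sqrt δ)^3 * (Real.sqrt Δ)^3 / ((Real.sqrt δ)^4 + (Real.sqrt Δ)^4) := by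
      have h1 : (Δ * δ) ^ ((3:ℝ)/2) = (Real.sqrt (Δ * δ))^3 := by
        rw [Real.sqrt_eq_rpow, ← Real.rpow_natCast ((Δ*δ) ^ ((1:ℝ)/2)) 3,
          ← Real.rpow_mul (by positivity : (0:ℝ) ≤ Δ*δ)]
        norm_num
      have e2 : (Real.sqrt δ)^4 = δ^2 := by
        rw [show (Real.sqrt δ)^4 = ((Real.sqrt δ)^2)^2 by ring, Real.sq_sqrt hδpos.le]
      have e3 : (Real.sqrt Δ)^4 = Δ^2 := by
        rw [show (Real.sqrt Δ)^4 = ((Real.sqrt Δ)^2)^2 by ring, Real.sq_sqrt hΔpos.le]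
      rw [h1, Real.sqrt_mul hΔpos.le, e2, e3, mul_pow]
      ring
    rw [hC]
    unfold randicIndex
    have hb : ∑ u, ∑ v ∈ G.neighborFinset u,
        ((Real.sqrt δ)^3 * (Real.sqrt Δ)^3 / ((Real.sqrt δ)^4 + (Real.sqrt Δ)^4))
          * (1/((G.degree u : ℝ))^2 + 1/((G.degree v : ℝ))^2)
        ≤ ∑ u, ∑ v ∈ G.neighborFinset u,
          1 / Real.sqrt ((G.degree u : ℝ) * (G.degree v : ℝ)) := by
      refine Finset.sum_le_sum fun u _ => Finset.sum_le_sum fun v _ => ?_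
      refine term_lowerD w δ Δ _ _ hw0 hw hδpos (by rw [hw2]; exact hcond)
        (hdeg_ge u) (hdeg_le u) (hdeg_ge v) (hdeg_le v)
    have heq : ∑ u, ∑ v ∈ G.neighborFinset u,
        ((Real.sqrt δ)^3 * (Real.sqrt Δ)^3 / ((Real.sqrt δ)^4 + (Real.sqrt Δ)^4))
          * (1/((G.degree u : ℝ))^2 + 1/((G.degree v : ℝ))^2)
        = ((Real.sqrt δ)^3 * (Real.sqrt Δ)^3 / ((Real.sqrt δ)^4 + (Real.sqrt Δ)^4))
          * (2 * inverseDegree G) := by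
      rw [← sum_pair_inv_sq G]
      simp_rw [← Finset.mul_sum]
    calc (Real.sqrt δ)^3 * (Real.sqrt Δ)^3 / ((Real.sqrt δ)^4 + (Real.sqrt Δ)^4)
          * inverseDegree G
        = (1/2) * ((Real.sqrt δ)^3 * (Real.sqrt Δ)^3 / ((Real.sqrt δ)^4 + (Real.sqrt Δ)^4)
          * (2 * inverseDegree G)) := by ring
      _ ≤ (1/2) * ∑ u, ∑ v ∈ G.neighborFinset u,
          1 / Real.sqrt ((G.degree u : ℝ) * (G.degree v : ℝ)) := by
          rw [← heq]; linarith [hb]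
  -- Part 2 : equality iff regular
  have part2 : randicIndex G = (G.maxDegree : ℝ) / 2 * inverseDegree G ↔
      ∃ k, G.IsRegularOfDegree k := by
    constructor
    · intro heq
      rcases isEmpty_or_nonempty V with hV | hV
      · exact ⟨0, fun v => (IsEmpty.false v).elim⟩
      have hΔpos : (0:ℝ) < (G.maxDegree : ℝ) := by
        obtain ⟨v, hv⟩ := G.exists_maximal_degree_vertex
        have : 0 < G.maxDegree := hv ▸ hiso v
        exact_mod_cast this
      -- R ≤ n/2
      have hRn : randicIndex G ≤ (Fintype.card V : ℝ)/2 := by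
        unfold randicIndex
        have hb : ∑ u, ∑ v ∈ G.neighborFinset u,
            1 / Real.sqrt ((G.degree u : ℝ) * (G.degree v : ℝ))
            ≤ ∑ u, ∑ v ∈ G.neighborFinset u,
              (1/2) * (1/((G.degree u : ℝ)) + 1/((G.degree v : ℝ))) := by
          refine Finset.sum_le_sum fun u _ => Finset.sum_le_sum fun v _ => ?_
          exact term_am _ _ (hdeg_pos u) (hdeg_pos v)
        have h1 : ∑ u : V, ∑ _v ∈ G.neighborFinset u, 1/((G.degree u : ℝ))
            = (Fintype.card V : ℝ) := by
          have hone : ∀ u : V, ∑ _v ∈ G.neighborFinset u, 1/((G.degree u : ℝ)) = 1 := by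
            intro u
            rw [sum_const, G.card_neighborFinset_eq_degree, nsmul_eq_mul, mul_one_div,
              div_self (ne_of_gt (hdeg_pos u))]
          calc ∑ u : V, ∑ _v ∈ G.neighborFinset u, 1/((G.degree u : ℝ))
              = ∑ _u : V, (1:ℝ) := sum_congr rfl fun u _ => hone u
            _ = (Fintype.card V : ℝ) := by simp
        have hsplit : ∑ u, ∑ v ∈ G.neighborFinset u,
            (1/2) * (1/((G.degree u : ℝ)) + 1/((G.degree v : ℝ)))
            = (Fintype.card V : ℝ) := by
          rw [double_sum_const_mul G (1/2)
              (fun u v => 1/((G.degree u : ℝ)) + 1/((G.degree v : ℝ))),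
            double_sum_add G (fun u v => 1/((G.degree u : ℝ)))
              (fun u v => 1/((G.degree v : ℝ))),
            adj_sum_swap G (fun u v => 1/((G.degree v : ℝ))), h1]
          ring
        calc (1/2 : ℝ) * ∑ u, ∑ v ∈ G.neighborFinset u,
              1 / Real.sqrt ((G.degree u : ℝ) * (G.degree v : ℝ))
            ≤ (1/2) * (Fintype.card V : ℝ) := by rw [← hsplit]; linarith [hb]
          _ = (Fintype.card V : ℝ)/2 := by ring
      -- Δ/2 * ID ≥ n/2, with equality forcing regularity
      have hID : ∀ u : V, 1/(G.maxDegree : ℝ) ≤ 1/(G.degree u : ℝ) := fun u =>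
        one_div_le_one_div_of_le (hdeg_pos u) (hdeg_le u)
      have hIDn : (Fintype.card V : ℝ)/(G.maxDegree : ℝ) ≤ inverseDegree G := by
        unfold inverseDegree
        calc (Fintype.card V : ℝ)/(G.maxDegree : ℝ)
            = ∑ _u : V, 1/(G.maxDegree : ℝ) := by
              rw [sum_const, nsmul_eq_mul, Finset.card_univ]; ring
          _ ≤ ∑ u, 1/(G.degree u : ℝ) := Finset.sum_le_sum fun u _ => hID u
      have hIDeq : inverseDegree G = (Fintype.card V : ℝ)/(G.maxDegree : ℝ) := by
        by_contra hne
        have hlt : (Fintype.card V : ℝ)/(G.maxDegree : ℝ) < inverseDegree G :=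
          lt_of_le_of_ne hIDn (Ne.symm hne)
        have : (Fintype.card V : ℝ)/2 < (G.maxDegree : ℝ)/2 * inverseDegree G := by
          have := mul_lt_mul_of_pos_left hlt (by positivity : (0:ℝ) < (G.maxDegree : ℝ)/2)
          calc (Fintype.card V : ℝ)/2
              = (G.maxDegree : ℝ)/2 * ((Fintype.card V : ℝ)/(G.maxDegree : ℝ)) := by
                field_simp
            _ < (G.maxDegree : ℝ)/2 * inverseDegree G := this
        linarith [hRn, heq.ge, heq.le]
      -- from hIDeq, every degree equals maxDegree
      have hall : ∀ u : V, G.degree u = G.maxDegree := by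
        intro u
        have hsum : ∑ u : V, 1/(G.degree u : ℝ) = ∑ _u : V, 1/(G.maxDegree : ℝ) := by
          have : ∑ _u : V, 1/(G.maxDegree : ℝ) = (Fintype.card V : ℝ)/(G.maxDegree : ℝ) := by
            rw [sum_const, nsmul_eq_mul, Finset.card_univ]; ring
          rw [this, ← hIDeq]; rfl
        have := (Finset.sum_eq_sum_iff_of_le (fun i _ => hID i)).1 hsum.symm u (mem_univ u)
        have h0 : ((G.degree u : ℝ)) ≠ 0 := ne_of_gt (hdeg_pos u)
        have h0' : ((G.maxDegree : ℝ)) ≠ 0 := ne_of_gt hΔpos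
        field_simp at this
        exact_mod_cast this
      exact ⟨G.maxDegree, hall⟩
    · rintro ⟨k, hk⟩
      rcases isEmpty_or_nonempty V with hV | hV
      · simp [randicIndex, inverseDegree, univ_eq_empty]
      -- regular: min = max, use part1 and part3
      have hmax : G.maxDegree = k := by
        apply le_antisymm
        · exact G.maxDegree_le_of_forall_degree_le k (fun v => (hk v).le)
        · obtain v := Classical.arbitrary V
          rw [← hk v]; exact G.degree_le_maxDegree v
      have hmin : G.minDegree = k := by
        obtain ⟨v, hv⟩ := G.exists_minimal_degree_vertex
        rw [hv, hk v]
      have hcond : s₀ * (G.maxDegree : ℝ) ≤ (G.minDegree : ℝ) := by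
        rw [hmax, hmin]
        have hk0 : (0:ℝ) ≤ (k : ℝ) := Nat.cast_nonneg k
        nlinarith
      have h3 := part3 hcond
      have heqδΔ : (G.minDegree : ℝ) = (G.maxDegree : ℝ) := by rw [hmax, hmin]
      exact le_antisymm part1 (by rw [← heqδΔ]; exact h3)
  exact ⟨part1, part2, part3, part4⟩
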